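/- arXiv:math/9903180 — 3 statements merged into one kernel-verified Lean document; each statement's English description precedes it below -/
import Mathlib

section
/- G_Δ is the S(V)-submodule of R_Δ generated by S_Δ; that is, G_Δ is the smallest linear subspace of R_Δ containing all simple fractions φ_σ and stable under all directional derivatives ∂(v), v ∈ V. -/
open Topology Filter
open scoped Classical

noncomputable section

abbrev Vc (r : ℕ) := Fin r → ℂ
abbrev DualV (r : ℕ) := Module.Dual ℂ (Vc r)

/-- The set of regular points: points where no linear form of `Δ` vanishes. -/
def Reg (r : ℕ) (Δ : Finset (DualV r)) : Set (Vc r) := {z | ∀ α ∈ Δ, α z ≠ 0}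

/-- Extension of a function defined on the regular set by `0`. -/
def extendFn (r : ℕ) (Δ : Finset (DualV r)) (f : ↥(Reg r Δ) → ℂ) : Vc r → ℂ :=
  fun w => if h : w ∈ Reg r Δ then f ⟨w, h⟩ else 0

/-- Directional derivative `(∂(v)f)(z) = d/dε f(z+εv)|_{ε=0}`. -/
def Dop (r : ℕ) (Δ : Finset (DualV r)) (v : Vc r) (f : ↥(Reg r Δ) → ℂ) :
    ↥(Reg r Δ) → ℂ :=
  fun z => deriv (fun ε : ℂ => extendFn r Δ f (z.1 + ε • v)) 0

/-- The ring `R_Δ` of rational functions with poles on the hyperplane arrangement: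
generated by the linear forms (hence all polynomial functions) and the inverses of
the elements of `Δ`, viewed as functions on the regular set. -/
def RΔ (r : ℕ) (Δ : Finset (DualV r)) : Subalgebra ℂ (↥(Reg r Δ) → ℂ) :=
  Algebra.adjoin ℂ ({g | ∃ ξ : DualV r, g = fun z => ξ z.1} ∪
    {g | ∃ α ∈ Δ, g = fun z => (α z.1)⁻¹})

/-- The subspace `∂(V)R_Δ` of derivatives. -/
def derivSub (r : ℕ) (Δ : Finset (DualV r)) : Submodule ℂ (↥(Reg r Δ) → ℂ) :=
  Submodule.span ℂ {g | ∃ v : Vc r, ∃ f ∈ RΔ r Δ, g = Dop r Δ v f}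

/-- `σ` is a basis of `Δ`: a subset of `Δ` whose elements form a basis of `V^*`. -/
def IsΔBasis (r : ℕ) (Δ σ : Finset (DualV r)) : Prop :=
  σ ⊆ Δ ∧ LinearIndependent ℂ (fun x : ↥(σ : Set (DualV r)) => (x : DualV r)) ∧
    Submodule.span ℂ (σ : Set (DualV r)) = ⊤

/-- The simple fraction `φ_σ = 1/∏_{α ∈ σ} α`. -/
def phiF (r : ℕ) (Δ σ : Finset (DualV r)) : ↥(Reg r Δ) → ℂ :=
  fun z => (∏ α ∈ σ, α z.1)⁻¹

/-- The space `S_Δ` of simple elements. -/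
def SΔ (r : ℕ) (Δ : Finset (DualV r)) : Submodule ℂ (↥(Reg r Δ) → ℂ) :=
  Submodule.span ℂ {g | ∃ σ, IsΔBasis r Δ σ ∧ g = phiF r Δ σ}

/-- The space `G_Δ`, spanned by the `φ_κ = 1/∏_{α ∈ κ} α` over generating sequences `κ`. -/
def GΔ (r : ℕ) (Δ : Finset (DualV r)) : Submodule ℂ (↥(Reg r Δ) → ℂ) :=
  Submodule.span ℂ {g | ∃ (k : ℕ) (κ : Fin k → DualV r), (∀ i, κ i ∈ Δ) ∧
    Submodule.span ℂ (Set.range κ) = ⊤ ∧ g = fun z => (∏ i, κ i z.1)⁻¹}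

/-- The algebra of polynomial functions, generated by the linear forms. -/
def polyAlg (r : ℕ) (Δ : Finset (DualV r)) : Subalgebra ℂ (↥(Reg r Δ) → ℂ) :=
  Algebra.adjoin ℂ {g | ∃ ξ : DualV r, g = fun z => ξ z.1}

/-- One-variable residue at `0`, defined through the circle integral over small circles. -/
def res0 (g : ℂ → ℂ) : ℂ :=
  limUnder (𝓝[>] (0 : ℝ))
    (fun ε : ℝ => (2 * (Real.pi : ℂ) * Complex.I)⁻¹ * ∮ w in C(0, ε), g w)

/-- Iterated one-variable residues, the innermost residue being taken in the
last variable. -/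
def iterRes : (n : ℕ) → ((Fin n → ℂ) → ℂ) → ℂ
  | 0, F => F (fun i => i.elim0)
  | n + 1, F => res0 (fun z₁ => iterRes n (fun z' => F (Fin.cons z₁ z')))

/-- The iterated residue `Res^{oσ}` with respect to an ordered basis whose dual basis
is `e`: substitute `z = ∑ c_j e_j` (so that the coordinates are `z_j = ⟨α_j, z⟩`) and
take iterated residues. -/
def iterResOB (r : ℕ) (e : Fin r → Vc r) (F : Vc r → ℂ) : ℂ :=
  iterRes r (fun c => F (∑ j, c j • e j))

/-- `e` is the dual basis of the ordered basis `oσ`. -/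
def IsDualFamily (r : ℕ) (oσ : Fin r → DualV r) (e : Fin r → Vc r) : Prop :=
  ∀ i j, oσ i (e j) = (if i = j then 1 else 0)

/-- The simple fraction attached to an ordered basis. -/
def phiO (r : ℕ) (Δ : Finset (DualV r)) (b : Fin r → DualV r) : ↥(Reg r Δ) → ℂ :=
  fun z => (∏ j, b j z.1)⁻¹


def fracF (r : ℕ) (Δ : Finset (DualV r)) {k : ℕ} (κ : Fin k → DualV r) : ↥(Reg r Δ) → ℂ :=
  fun z => (∏ i, κ i z.1)⁻¹

lemma isOpen_Reg (r : ℕ) (Δ : Finset (DualV r)) : IsOpen (Reg r Δ) := by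
  have : Reg r Δ = ⋂ α ∈ Δ, (fun z => α z) ⁻¹' {(0:ℂ)}ᶜ := by
    ext z; simp [Reg, Set.mem_iInter]
  rw [this]
  exact isOpen_biInter_finset fun α _ =>
    (isOpen_compl_singleton).preimage α.continuous_of_finiteDimensional

lemma key_hasDerivAt (r : ℕ) (Δ : Finset (DualV r)) (hΔ : ∀ α ∈ Δ, α ≠ 0) {k : ℕ}
    (κ : Fin k → DualV r) (hκ : ∀ i, κ i ∈ Δ) (v : Vc r) (z : ↥(Reg r Δ)) :
    HasDerivAt (fun ε : ℂ => extendFn r Δ (fracF r Δ κ) (z.1 + ε • v))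
      (-(∑ i, κ i v * (κ i z.1)⁻¹) * (∏ i, κ i z.1)⁻¹) 0 := by
  have ha : ∀ i, κ i z.1 ≠ 0 := fun i => z.2 (κ i) (hκ i)
  have hQ : (∏ i, κ i z.1) ≠ 0 := Finset.prod_ne_zero_iff.2 fun i _ => ha i
  -- derivative of the genuine rational function
  have hP : HasDerivAt (fun ε : ℂ => ∏ i, (κ i z.1 + ε * κ i v))
      (∑ i, (∏ j ∈ Finset.univ.erase i, κ j z.1) • κ i v) 0 := by
    have := HasDerivAt.fun_finsetProd (u := Finset.univ)
      (f := fun i (ε : ℂ) => κ i z.1 + ε * κ i v) (f' := fun i => κ i v) (x := (0:ℂ))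
      (fun i _ => by simpa using ((hasDerivAt_id (0:ℂ)).mul_const (κ i v)).const_add (κ i z.1))
    simpa using this
  have hG : HasDerivAt (fun ε : ℂ => (∏ i, (κ i z.1 + ε * κ i v))⁻¹)
      (-(∑ i, κ i v * (κ i z.1)⁻¹) * (∏ i, κ i z.1)⁻¹) 0 := by
    have h0 : (∏ i, (κ i z.1 + (0:ℂ) * κ i v)) ≠ 0 := by simpa using hQ
    have : HasDerivAt (fun ε : ℂ => (∏ i, (κ i z.1 + ε * κ i v))⁻¹) _ 0 := hP.inv h0
    convert this using 1
    have he : ∀ i : Fin k, (∏ j ∈ Finset.univ.erase i, κ j z.1)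
        = (∏ j, κ j z.1) * (κ i z.1)⁻¹ := by
      intro i
      rw [eq_mul_inv_iff_mul_eq₀ (ha i)]
      exact Finset.prod_erase_mul _ _ (Finset.mem_univ i)
    simp only [zero_mul, add_zero, smul_eq_mul, he]
    rw [Finset.sum_congr rfl (fun i _ => by ring : ∀ i ∈ Finset.univ,
      (∏ j, κ j z.1) * (κ i z.1)⁻¹ * κ i v = (∏ j, κ j z.1) * (κ i v * (κ i z.1)⁻¹)),
      ← Finset.mul_sum]
    field_simp
  -- eventual equality
  refine hG.congr_of_eventuallyEq ?_
  have hcont : Continuous (fun ε : ℂ => z.1 + ε • v) := by continuity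
  have hmem : (fun ε : ℂ => z.1 + ε • v) ⁻¹' Reg r Δ ∈ 𝓝 (0:ℂ) := by
    refine hcont.continuousAt.preimage_mem_nhds ?_
    refine (isOpen_Reg r Δ).mem_nhds ?_
    simpa using z.2
  filter_upwards [hmem] with ε hε
  have hε' : z.1 + ε • v ∈ Reg r Δ := hε
  have : extendFn r Δ (fracF r Δ κ) (z.1 + ε • v) = (∏ i, κ i (z.1 + ε • v))⁻¹ := by
    rw [extendFn]; rw [dif_pos hε']; rfl
  rw [this]
  congr 1
  refine Finset.prod_congr rfl fun i _ => ?_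
  simp [map_add, map_smul, smul_eq_mul]


lemma dop_frac (r : ℕ) (Δ : Finset (DualV r)) (hΔ : ∀ α ∈ Δ, α ≠ 0) {k : ℕ}
    (κ : Fin k → DualV r) (hκ : ∀ i, κ i ∈ Δ) (v : Vc r) :
    Dop r Δ v (fracF r Δ κ)
      = fun z => -(∑ i, κ i v * (κ i z.1)⁻¹) * fracF r Δ κ z := by
  funext z
  exact (key_hasDerivAt r Δ hΔ κ hκ v z).deriv

lemma frac_snoc_mem (r : ℕ) (Δ : Finset (DualV r)) {k : ℕ}
    (κ : Fin k → DualV r) (hκ : ∀ i, κ i ∈ Δ)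
    (hsp : Submodule.span ℂ (Set.range κ) = ⊤) (i : Fin k) :
    (fun z : ↥(Reg r Δ) => ((κ i z.1)⁻¹ * fracF r Δ κ z)) ∈ GΔ r Δ := by
  refine Submodule.subset_span ⟨k + 1, Fin.snoc κ (κ i), ?_, ?_, ?_⟩
  · intro j
    refine Fin.lastCases ?_ ?_ j
    · simpa using hκ i
    · intro j'; simpa using hκ j'
  · rw [eq_top_iff, ← hsp]
    refine Submodule.span_mono ?_
    rintro x ⟨j, rfl⟩
    exact ⟨Fin.castSucc j, by simp⟩
  · funext z
    rw [fracF, Fin.prod_univ_castSucc]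
    simp [mul_inv, mul_comm]

lemma extend_add (r : ℕ) (Δ : Finset (DualV r)) (f g : ↥(Reg r Δ) → ℂ) (w : Vc r) :
    extendFn r Δ (f + g) w = extendFn r Δ f w + extendFn r Δ g w := by
  unfold extendFn; split <;> simp

lemma extend_smul (r : ℕ) (Δ : Finset (DualV r)) (c : ℂ) (f : ↥(Reg r Δ) → ℂ) (w : Vc r) :
    extendFn r Δ (c • f) w = c * extendFn r Δ f w := by
  unfold extendFn; split <;> simp

lemma extend_zero (r : ℕ) (Δ : Finset (DualV r)) (w : Vc r) :
    extendFn r Δ 0 w = 0 := by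
  unfold extendFn; split <;> simp

lemma dop_frac_mem (r : ℕ) (Δ : Finset (DualV r)) (hΔ : ∀ α ∈ Δ, α ≠ 0) {k : ℕ}
    (κ : Fin k → DualV r) (hκ : ∀ i, κ i ∈ Δ)
    (hsp : Submodule.span ℂ (Set.range κ) = ⊤) (v : Vc r) :
    Dop r Δ v (fracF r Δ κ) ∈ GΔ r Δ := by
  have : Dop r Δ v (fracF r Δ κ)
      = ∑ i : Fin k, (-(κ i v)) • (fun z : ↥(Reg r Δ) => (κ i z.1)⁻¹ * fracF r Δ κ z) := by
    rw [dop_frac r Δ hΔ κ hκ v]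
    funext z
    simp only [Finset.sum_apply, Pi.smul_apply, smul_eq_mul]
    rw [neg_mul, Finset.sum_mul, ← Finset.sum_neg_distrib]
    exact Finset.sum_congr rfl fun i _ => by ring
  rw [this]
  exact Submodule.sum_mem _ fun i _ =>
    Submodule.smul_mem _ _ (frac_snoc_mem r Δ κ hκ hsp i)

lemma dop_mem (r : ℕ) (Δ : Finset (DualV r)) (hΔ : ∀ α ∈ Δ, α ≠ 0) (v : Vc r)
    (f : ↥(Reg r Δ) → ℂ) (hf : f ∈ GΔ r Δ) :
    Dop r Δ v f ∈ GΔ r Δ ∧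
      ∀ z : ↥(Reg r Δ), DifferentiableAt ℂ (fun ε : ℂ => extendFn r Δ f (z.1 + ε • v)) 0 := by
  induction hf using Submodule.span_induction with
  | mem g hg =>
    obtain ⟨k, κ, h1, h2, rfl⟩ := hg
    exact ⟨dop_frac_mem r Δ hΔ κ h1 h2 v,
      fun z => (key_hasDerivAt r Δ hΔ κ h1 v z).differentiableAt⟩
  | zero =>
    have h0 : ∀ z : ↥(Reg r Δ), (fun ε : ℂ => extendFn r Δ 0 (z.1 + ε • v)) = fun _ => (0:ℂ) :=
      fun z => funext fun ε => extend_zero r Δ _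
    constructor
    · have : Dop r Δ v 0 = 0 := by
        funext z; simp only [Dop, Pi.zero_apply]; rw [h0 z]; exact deriv_const 0 0
      rw [this]; exact Submodule.zero_mem _
    · intro z; rw [h0 z]; exact differentiableAt_const _
  | add f g hf hg ihf ihg =>
    have hfg : ∀ z : ↥(Reg r Δ), (fun ε : ℂ => extendFn r Δ (f + g) (z.1 + ε • v))
        = fun ε : ℂ => extendFn r Δ f (z.1 + ε • v) + extendFn r Δ g (z.1 + ε • v) :=
      fun z => funext fun ε => extend_add r Δ f g _
    constructor
    · have : Dop r Δ v (f + g) = Dop r Δ v f + Dop r Δ v g := by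
        funext z
        simp only [Dop, Pi.add_apply]
        rw [hfg z]
        exact deriv_add (ihf.2 z) (ihg.2 z)
      rw [this]; exact Submodule.add_mem _ ihf.1 ihg.1
    · intro z; rw [hfg z]; exact (ihf.2 z).add (ihg.2 z)
  | smul c f hf ihf =>
    have hcf : ∀ z : ↥(Reg r Δ), (fun ε : ℂ => extendFn r Δ (c • f) (z.1 + ε • v))
        = fun ε : ℂ => c * extendFn r Δ f (z.1 + ε • v) :=
      fun z => funext fun ε => extend_smul r Δ c f _
    constructor
    · have : Dop r Δ v (c • f) = c • Dop r Δ v f := by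
        funext z
        simp only [Dop, Pi.smul_apply, smul_eq_mul]
        rw [hcf z]
        exact deriv_const_mul c (ihf.2 z)
      rw [this]; exact Submodule.smul_mem _ _ ihf.1
    · intro z; rw [hcf z]; exact (ihf.2 z).const_mul c

lemma dual_vec (r : ℕ) (S : Finset (DualV r))
    (hind : LinearIndependent ℂ (fun x : ↥(S : Set (DualV r)) => (x : DualV r)))
    (hsp : Submodule.span ℂ (S : Set (DualV r)) = ⊤)
    (α : DualV r) (hα : α ∈ S) :
    ∃ v : Vc r, ∀ β ∈ S, β v = if β = α then 1 else 0 := by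
  have hsp' : ⊤ ≤ Submodule.span ℂ (Set.range (fun x : ↥(S : Set (DualV r)) => (x : DualV r))) := by
    rw [Subtype.range_coe]; exact hsp.ge
  let b : Module.Basis ↥(S : Set (DualV r)) ℂ (DualV r) := Module.Basis.mk hind hsp'
  refine ⟨(Module.evalEquiv ℂ (Vc r)).symm (b.coord ⟨α, hα⟩), ?_⟩
  intro β hβ
  have h1 : β ((Module.evalEquiv ℂ (Vc r)).symm (b.coord ⟨α, hα⟩))
      = b.coord ⟨α, hα⟩ β := Module.apply_evalEquiv_symm_apply ℂ (Vc r) β _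
  have hb : β = b ⟨β, hβ⟩ := by rw [Module.Basis.mk_apply]
  have h2 : (b.coord ⟨α, hα⟩) β = if β = α then 1 else 0 := by
    conv_lhs => rw [hb]
    rw [Module.Basis.coord_apply, Module.Basis.repr_self_apply]
    simp [Subtype.ext_iff, eq_comm]
  rw [h1, h2]

lemma indep_case (r : ℕ) (Δ : Finset (DualV r)) (hΔ : ∀ α ∈ Δ, α ≠ 0)
    (W : Submodule ℂ (↥(Reg r Δ) → ℂ))
    (hW1 : ∀ σ : Finset (DualV r), IsΔBasis r Δ σ → phiF r Δ σ ∈ W)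
    (hW2 : ∀ (v : Vc r) (f : ↥(Reg r Δ) → ℂ), f ∈ W → Dop r Δ v f ∈ W) :
    ∀ (k : ℕ) (κ : Fin k → DualV r), (∀ i, κ i ∈ Δ) →
      LinearIndependent ℂ
        (fun x : ↥((Finset.image κ Finset.univ : Finset (DualV r)) : Set (DualV r)) =>
          (x : DualV r)) →
      Submodule.span ℂ (Set.range κ) = ⊤ → fracF r Δ κ ∈ W := by
  intro k
  induction k with
  | zero =>
    intro κ hκ hind hsp
    have : fracF r Δ κ = phiF r Δ ∅ := by
      funext z; simp [fracF, phiF]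
    rw [this]
    refine hW1 ∅ ⟨Finset.empty_subset _, ?_, ?_⟩
    · have : IsEmpty ↥(((∅ : Finset (DualV r))) : Set (DualV r)) :=
        ⟨fun x => by simpa using x.2⟩
      exact linearIndependent_empty_type
    · rw [Finset.coe_empty, ← Set.range_eq_empty κ, hsp]
  | succ m ih =>
    intro κ hκ hind hsp
    set S : Finset (DualV r) := Finset.image κ Finset.univ with hS
    have hScoe : (S : Set (DualV r)) = Set.range κ := by
      rw [hS, Finset.coe_image, Finset.coe_univ, Set.image_univ]
    by_cases hinj : Function.Injective κ
    · have hprod : fracF r Δ κ = phiF r Δ S := by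
        funext z
        rw [fracF, phiF, hS, Finset.prod_image (fun i _ j _ h => hinj h)]
      rw [hprod]
      refine hW1 S ⟨?_, hind, ?_⟩
      · intro β hβ
        obtain ⟨i, _, rfl⟩ := Finset.mem_image.mp hβ
        exact hκ i
      · rw [hScoe]; exact hsp
    · obtain ⟨i, j, hij, hne⟩ := Function.not_injective_iff.mp hinj
      set κ' : Fin m → DualV r := κ ∘ j.succAbove with hκ'def
      have hκ' : ∀ i', κ' i' ∈ Δ := fun i' => hκ _
      have himg : Finset.image κ' Finset.univ = S := by
        apply Finset.Subset.antisymm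
        · intro β hβ
          obtain ⟨i', _, rfl⟩ := Finset.mem_image.mp hβ
          exact Finset.mem_image.mpr ⟨_, Finset.mem_univ _, rfl⟩
        · intro β hβ
          obtain ⟨i0, _, rfl⟩ := Finset.mem_image.mp hβ
          by_cases h0 : i0 = j
          · obtain ⟨i1, hi1⟩ := Fin.exists_succAbove_eq hne
            subst h0
            refine Finset.mem_image.mpr ⟨i1, Finset.mem_univ _, ?_⟩
            rw [hκ'def]; simp only [Function.comp_apply, hi1]; exact hij
          · obtain ⟨i1, hi1⟩ := Fin.exists_succAbove_eq h0
            exact Finset.mem_image.mpr ⟨i1, Finset.mem_univ _, by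
              rw [hκ'def]; simp only [Function.comp_apply, hi1]⟩
      have hrange' : Set.range κ' = Set.range κ := by
        rw [← hScoe, ← himg, Finset.coe_image, Finset.coe_univ, Set.image_univ]
      have hsp' : Submodule.span ℂ (Set.range κ') = ⊤ := by rw [hrange', hsp]
      have hind' : LinearIndependent ℂ
          (fun x : ↥((Finset.image κ' Finset.univ : Finset (DualV r)) : Set (DualV r)) =>
            (x : DualV r)) := by
        rw [himg]; exact hind
      have hfr' : fracF r Δ κ' ∈ W := ih κ' hκ' hind' hsp'
      -- dual vector for α = κ j
      set α : DualV r := κ j with hα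
      have hαS : α ∈ S := Finset.mem_image.mpr ⟨j, Finset.mem_univ _, rfl⟩
      obtain ⟨v, hv⟩ := dual_vec r S (by rw [hS]; exact hind) (by rw [hScoe]; exact hsp) α hαS
      set m₀ : ℕ := (Finset.univ.filter (fun i' => κ' i' = α)).card with hm₀
      have hm₀pos : 0 < m₀ := by
        rw [hm₀]
        refine Finset.card_pos.mpr ?_
        obtain ⟨i1, hi1⟩ := Fin.exists_succAbove_eq hne
        exact ⟨i1, Finset.mem_filter.mpr ⟨Finset.mem_univ _, by
          rw [hκ'def]; simp only [Function.comp_apply, hi1]; exact hij⟩⟩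
      have hκ'S : ∀ i', κ' i' ∈ S := fun i' => by
        rw [← himg]; exact Finset.mem_image.mpr ⟨i', Finset.mem_univ _, rfl⟩
      have hdop : Dop r Δ v (fracF r Δ κ')
          = fun z : ↥(Reg r Δ) => -((m₀ : ℂ) * (α z.1)⁻¹) * fracF r Δ κ' z := by
        rw [dop_frac r Δ hΔ κ' hκ' v]
        funext z
        congr 2
        calc ∑ i', κ' i' v * (κ' i' z.1)⁻¹
            = ∑ i', if κ' i' = α then (α z.1)⁻¹ else 0 := by
              refine Finset.sum_congr rfl fun i' _ => ?_
              rw [hv (κ' i') (hκ'S i')]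
              by_cases h : κ' i' = α <;> simp [h]
          _ = (m₀ : ℂ) * (α z.1)⁻¹ := by
              rw [← Finset.sum_filter, Finset.sum_const, hm₀, nsmul_eq_mul]
      have hfrac : fracF r Δ κ = fun z : ↥(Reg r Δ) => (α z.1)⁻¹ * fracF r Δ κ' z := by
        funext z
        rw [fracF, Fin.prod_univ_succAbove (fun i0 => κ i0 z.1) j, mul_inv]
        rfl
      have hm₀C : (m₀ : ℂ) ≠ 0 := Nat.cast_ne_zero.mpr hm₀pos.ne'
      have : fracF r Δ κ = (-(m₀ : ℂ))⁻¹ • Dop r Δ v (fracF r Δ κ') := by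
        rw [hdop, hfrac]
        funext z
        simp only [Pi.smul_apply, smul_eq_mul]
        field_simp
      rw [this]
      exact Submodule.smul_mem _ _ (hW2 v _ hfr')

lemma reduce (r : ℕ) (Δ : Finset (DualV r)) (hΔ : ∀ α ∈ Δ, α ≠ 0) {k : ℕ}
    (κ : Fin k → DualV r) (hκ : ∀ i, κ i ∈ Δ)
    (hsp : Submodule.span ℂ (Set.range κ) = ⊤)
    (R : DualV r → ℕ) (hR : ∀ β ∈ Δ, ∀ γ ∈ Δ, R β = R γ → β = γ)
    (hdep : ¬ LinearIndependent ℂ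
      (fun x : ↥((Finset.image κ Finset.univ : Finset (DualV r)) : Set (DualV r)) =>
        (x : DualV r))) :
    ∃ (ι : Type) (_ : Fintype ι) (c : ι → ℂ) (seq : ι → (Fin k → DualV r)),
      (∀ t (i : Fin k), seq t i ∈ Δ) ∧
      (∀ t, Submodule.span ℂ (Set.range (seq t)) = ⊤) ∧
      (∀ t, ∑ i, R (seq t i) < ∑ i, R (κ i)) ∧
      fracF r Δ κ = ∑ t, c t • fracF r Δ (seq t) := by
  classical
  set S : Finset (DualV r) := Finset.image κ Finset.univ with hS
  have hSΔ : ∀ β ∈ S, β ∈ Δ := by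
    intro β hβ; obtain ⟨i, _, rfl⟩ := Finset.mem_image.mp hβ; exact hκ i
  obtain ⟨g, hg0, x₀, hx₀⟩ := Fintype.not_linearIndependent_iff.mp hdep
  set supp : Finset ↥((S : Set (DualV r))) := Finset.univ.filter (fun x => g x ≠ 0) with hsupp
  have hx₀s : x₀ ∈ supp := Finset.mem_filter.mpr ⟨Finset.mem_univ _, hx₀⟩
  obtain ⟨a, haS, hamin⟩ := supp.exists_min_image (fun x => R x.1) ⟨x₀, hx₀s⟩
  have hga : g a ≠ 0 := (Finset.mem_filter.mp haS).2
  have haΔ : (a : DualV r) ∈ Δ := hSΔ _ (by exact_mod_cast a.2)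
  -- choice of index for each element of S
  have hix : ∀ x : ↥((S : Set (DualV r))), ∃ i : Fin k, κ i = (x : DualV r) := by
    intro x
    have : (x : DualV r) ∈ S := by exact_mod_cast x.2
    obtain ⟨i, _, hi⟩ := Finset.mem_image.mp this
    exact ⟨i, hi⟩
  choose ix hixeq using hix
  set T : Finset ↥((S : Set (DualV r))) := supp.erase a with hT
  refine ⟨↥T, inferInstance, fun t => -(g t.1) / g a,
    fun t => Function.update κ (ix t.1) (a : DualV r), ?_, ?_, ?_, ?_⟩
  · intro t i
    dsimp only
    rw [Function.update_apply]
    split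
    · exact haΔ
    · exact hκ i
  · -- spanning
    intro t
    dsimp only
    have htne : (t.1 : DualV r) ≠ (a : DualV r) := by
      intro h
      exact (Finset.mem_erase.mp t.2).1 (Subtype.ext h)
    rw [eq_top_iff, ← hsp, Submodule.span_le]
    rintro _ ⟨i, rfl⟩
    by_cases hi : κ i = (t.1 : DualV r)
    · -- κ i = t, show t ∈ span of updated range
      rw [hi]
      have hxval : (t.1 : DualV r)
          = (-(g t.1))⁻¹ • ∑ y ∈ Finset.univ.erase t.1, g y • (y : DualV r) := by
        have hgt : g t.1 ≠ 0 := (Finset.mem_filter.mp (Finset.mem_of_mem_erase t.2)).2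
        have hsplit : g t.1 • (t.1 : DualV r)
            + ∑ y ∈ Finset.univ.erase t.1, g y • (y : DualV r) = 0 := by
          rw [Finset.add_sum_erase Finset.univ (fun y : ↥((S : Set (DualV r))) => g y • (y : DualV r)) (Finset.mem_univ t.1)]
          exact hg0
        have : g t.1 • (t.1 : DualV r) = -∑ y ∈ Finset.univ.erase t.1, g y • (y : DualV r) := by
          linear_combination (norm := module) hsplit
        have h2 : ∑ y ∈ Finset.univ.erase t.1, g y • (y : DualV r)
            = (-g t.1) • (t.1 : DualV r) := by
          rw [neg_smul, this, neg_neg]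
        rw [h2, smul_smul, inv_mul_cancel₀ (neg_ne_zero.mpr hgt), one_smul]
      rw [hxval]
      refine Submodule.smul_mem _ _ (Submodule.sum_mem _ fun y hy => ?_)
      refine Submodule.smul_mem _ _ (Submodule.subset_span ?_)
      have hyt : y ≠ t.1 := (Finset.mem_erase.mp hy).1
      refine ⟨ix y, ?_⟩
      rw [Function.update_apply]
      have : ix y ≠ ix t.1 := by
        intro h
        apply hyt
        apply Subtype.ext
        rw [← hixeq y, ← hixeq t.1, h]
      rw [if_neg this, hixeq y]
    · refine Submodule.subset_span ⟨i, ?_⟩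
      have hne2 : i ≠ ix t.1 := fun h => hi (by rw [h]; exact hixeq t.1)
      rw [Function.update_apply, if_neg hne2]
  · -- measure decrease
    intro t
    dsimp only
    have htT := t.2
    have htsupp : t.1 ∈ supp := Finset.mem_of_mem_erase htT
    have htne : (t.1 : ↥((S : Set (DualV r)))) ≠ a := (Finset.mem_erase.mp htT).1
    have hlt : R (a : DualV r) < R ((t.1 : ↥((S : Set (DualV r)))) : DualV r) := by
      refine lt_of_le_of_ne (hamin _ htsupp) fun h => ?_
      have htΔ : ((t.1 : ↥((S : Set (DualV r)))) : DualV r) ∈ Δ :=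
        hSΔ _ (by exact_mod_cast (t.1 : ↥((S : Set (DualV r)))).2)
      exact htne (Subtype.ext (hR _ haΔ _ htΔ h).symm)
    calc ∑ i, R (Function.update κ (ix t.1) (a : DualV r) i)
        = R (Function.update κ (ix t.1) (a : DualV r) (ix t.1))
            + ∑ i ∈ Finset.univ.erase (ix t.1), R (Function.update κ (ix t.1) (a : DualV r) i) :=
          (Finset.add_sum_erase _ _ (Finset.mem_univ _)).symm
      _ = R (a : DualV r) + ∑ i ∈ Finset.univ.erase (ix t.1), R (κ i) := by
          rw [Function.update_self]
          congr 1
          exact Finset.sum_congr rfl fun i hi => by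
            rw [Function.update_of_ne (Finset.mem_erase.mp hi).1]
      _ < R (κ (ix t.1)) + ∑ i ∈ Finset.univ.erase (ix t.1), R (κ i) := by
          rw [hixeq t.1]
          exact Nat.add_lt_add_right hlt _
      _ = ∑ i, R (κ i) := Finset.add_sum_erase Finset.univ (fun i => R (κ i)) (Finset.mem_univ _)
  · -- the partial fraction identity
    funext z
    have hz : ∀ β ∈ Δ, β z.1 ≠ 0 := fun β hβ => z.2 β hβ
    have hDne : (∏ i, κ i z.1) ≠ 0 := Finset.prod_ne_zero_iff.2 fun i _ => hz _ (hκ i)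
    set D : ℂ := ∏ i, κ i z.1 with hD
    have hrel : ∑ y : ↥((S : Set (DualV r))), g y * ((y : DualV r) z.1) = 0 := by
      have := LinearMap.congr_fun hg0 z.1
      simpa [LinearMap.sum_apply, LinearMap.smul_apply, smul_eq_mul] using this
    have haz : (a : DualV r) z.1 ≠ 0 := hz _ haΔ
    have hTrel : ∑ x ∈ T, g x * ((x : DualV r) z.1) = -(g a * ((a : DualV r) z.1)) := by
      have hsub : T ⊆ Finset.univ.erase a := by
        intro y hy
        exact Finset.mem_erase.mpr ⟨(Finset.mem_erase.mp hy).1, Finset.mem_univ _⟩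
      have hversus : ∑ y ∈ Finset.univ.erase a, g y * ((y : DualV r) z.1)
          = ∑ x ∈ T, g x * ((x : DualV r) z.1) := by
        refine (Finset.sum_subset hsub fun y hy hyT => ?_).symm
        have : y ∉ supp ∨ y = a := by
          by_cases h : y = a
          · exact Or.inr h
          · exact Or.inl fun hysupp => hyT (Finset.mem_erase.mpr ⟨h, hysupp⟩)
        rcases this with h | h
        · have : ¬ g y ≠ 0 := fun hgy => h (Finset.mem_filter.mpr ⟨Finset.mem_univ _, hgy⟩)
          simp [not_not.mp this]
        · exact absurd h (Finset.mem_erase.mp hy).1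
      have h0 : g a * ((a : DualV r) z.1)
          + ∑ y ∈ Finset.univ.erase a, g y * ((y : DualV r) z.1) = 0 := by
        rw [Finset.add_sum_erase Finset.univ
          (fun y : ↥((S : Set (DualV r))) => g y * ((y : DualV r) z.1)) (Finset.mem_univ a)]
        exact hrel
      rw [← hversus]
      linear_combination h0
    -- compute each term
    have hterm : ∀ x ∈ T, (-(g x) / g a) • fracF r Δ (Function.update κ (ix x) (a : DualV r)) z
        = (g x * ((x : DualV r) z.1)) * (-(1 / g a) * ((a : DualV r) z.1)⁻¹ * D⁻¹) := by
      intro x hx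
      have hxz : κ (ix x) = (x : DualV r) := hixeq x
      have hprodx : ∏ i, (Function.update κ (ix x) (a : DualV r)) i z.1
          = ((a : DualV r) z.1) * (D * ((x : DualV r) z.1)⁻¹) := by
        calc ∏ i, (Function.update κ (ix x) (a : DualV r)) i z.1
            = (Function.update κ (ix x) (a : DualV r)) (ix x) z.1
                * ∏ i ∈ Finset.univ.erase (ix x), (Function.update κ (ix x) (a : DualV r)) i z.1 :=
              (Finset.mul_prod_erase Finset.univ
                (fun i => (Function.update κ (ix x) (a : DualV r)) i z.1)
                (Finset.mem_univ _)).symm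
          _ = ((a : DualV r) z.1) * ∏ i ∈ Finset.univ.erase (ix x), κ i z.1 := by
              rw [Function.update_self]
              congr 1
              exact Finset.prod_congr rfl fun i hi => by
                rw [Function.update_of_ne (Finset.mem_erase.mp hi).1]
          _ = ((a : DualV r) z.1) * (D * ((x : DualV r) z.1)⁻¹) := by
              congr 1
              rw [eq_mul_inv_iff_mul_eq₀ (by rw [← hxz]; exact hz _ (hκ _))]
              rw [← hxz, hD]
              exact Finset.prod_erase_mul _ _ (Finset.mem_univ _)
      rw [smul_eq_mul]
      simp only [fracF]
      rw [hprodx, mul_inv, mul_inv, inv_inv]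
      ring
    show fracF r Δ κ z
        = (∑ t : {x // x ∈ T}, (-(g t.1) / g a)
            • fracF r Δ (Function.update κ (ix t.1) (a : DualV r))) z
    have hstep : ∑ x ∈ T, (-(g x) / g a) • fracF r Δ (Function.update κ (ix x) (a : DualV r)) z
        = (∑ x ∈ T, g x * ((x : DualV r) z.1))
            * (-(1 / g a) * ((a : DualV r) z.1)⁻¹ * D⁻¹) := by
      rw [Finset.sum_mul]
      exact Finset.sum_congr rfl fun x hx => by rw [hterm x hx]
    calc fracF r Δ κ z = D⁻¹ := rfl
      _ = (∑ x ∈ T, g x * ((x : DualV r) z.1))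
            * (-(1 / g a) * ((a : DualV r) z.1)⁻¹ * D⁻¹) := by
          rw [hTrel]
          field_simp
      _ = ∑ x ∈ T, (-(g x) / g a) • fracF r Δ (Function.update κ (ix x) (a : DualV r)) z :=
          hstep.symm
      _ = ∑ t : {x // x ∈ T}, (-(g t.1) / g a)
            • fracF r Δ (Function.update κ (ix t.1) (a : DualV r)) z :=
          (Finset.sum_coe_sort _ _).symm
      _ = (∑ t : {x // x ∈ T}, (-(g t.1) / g a)
            • fracF r Δ (Function.update κ (ix t.1) (a : DualV r))) z := by
          simp [Finset.sum_apply]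

lemma main_ind (r : ℕ) (Δ : Finset (DualV r)) (hΔ : ∀ α ∈ Δ, α ≠ 0)
    (W : Submodule ℂ (↥(Reg r Δ) → ℂ))
    (hW1 : ∀ σ : Finset (DualV r), IsΔBasis r Δ σ → phiF r Δ σ ∈ W)
    (hW2 : ∀ (v : Vc r) (f : ↥(Reg r Δ) → ℂ), f ∈ W → Dop r Δ v f ∈ W)
    (R : DualV r → ℕ) (hR : ∀ β ∈ Δ, ∀ γ ∈ Δ, R β = R γ → β = γ) :
    ∀ (n k : ℕ) (κ : Fin k → DualV r), (∀ i, κ i ∈ Δ) →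
      Submodule.span ℂ (Set.range κ) = ⊤ → (∑ i, R (κ i)) ≤ n → fracF r Δ κ ∈ W := by
  intro n
  induction n using Nat.strong_induction_on with
  | _ n ih =>
    intro k κ hκ hsp hμ
    by_cases hind : LinearIndependent ℂ
        (fun x : ↥((Finset.image κ Finset.univ : Finset (DualV r)) : Set (DualV r)) =>
          (x : DualV r))
    · exact indep_case r Δ hΔ W hW1 hW2 k κ hκ hind hsp
    · obtain ⟨ι, _, c, seq, hseqΔ, hseqsp, hseqμ, hident⟩ :=
        reduce r Δ hΔ κ hκ hsp R hR hind
      rw [hident]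
      refine Submodule.sum_mem _ fun t _ => Submodule.smul_mem _ _ ?_
      exact ih (∑ i, R (seq t i)) (lt_of_lt_of_le (hseqμ t) hμ) k (seq t)
        (hseqΔ t) (hseqsp t) le_rfl

/-- `G_Δ` is the `S(V)`-submodule of `R_Δ` generated by `S_Δ`,
i.e. the smallest linear subspace containing all simple fractions `φ_σ` and stable
under all directional derivatives `∂(v)`. -/
theorem stmt1 (r : ℕ) (Δ : Finset (DualV r)) (hΔ : ∀ α ∈ Δ, α ≠ 0) :
    (∀ σ : Finset (DualV r), IsΔBasis r Δ σ → phiF r Δ σ ∈ GΔ r Δ) ∧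
    (∀ (v : Vc r) (f : ↥(Reg r Δ) → ℂ), f ∈ GΔ r Δ → Dop r Δ v f ∈ GΔ r Δ) ∧
    (∀ W : Submodule ℂ (↥(Reg r Δ) → ℂ),
      (∀ σ : Finset (DualV r), IsΔBasis r Δ σ → phiF r Δ σ ∈ W) →
      (∀ (v : Vc r) (f : ↥(Reg r Δ) → ℂ), f ∈ W → Dop r Δ v f ∈ W) →
      GΔ r Δ ≤ W) := by
  classical
  set R : DualV r → ℕ := fun β => if h : β ∈ Δ then (Δ.equivFin ⟨β, h⟩ : ℕ) else 0 with hRdef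
  have hR : ∀ β ∈ Δ, ∀ γ ∈ Δ, R β = R γ → β = γ := by
    intro β hβ γ hγ h
    simp only [hRdef, dif_pos hβ, dif_pos hγ] at h
    have := Δ.equivFin.injective (Fin.val_injective h)
    exact congrArg Subtype.val this
  have hpart1 : ∀ σ : Finset (DualV r), IsΔBasis r Δ σ → phiF r Δ σ ∈ GΔ r Δ := by
    intro σ hσ
    obtain ⟨hsub, hind, hsp⟩ := hσ
    set κ : Fin σ.card → DualV r := fun i => ((σ.equivFin.symm i : ↥σ) : DualV r) with hκdef
    have hrange : Set.range κ = (σ : Set (DualV r)) := by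
      rw [show κ = (Subtype.val ∘ σ.equivFin.symm) from rfl, Set.range_comp,
        Equiv.range_eq_univ, Set.image_univ]
      ext x
      simp
    have hphi : phiF r Δ σ = fracF r Δ κ := by
      funext z
      rw [phiF, fracF]
      congr 1
      rw [show (∏ i, κ i z.1) = ∏ i, (fun x : ↥σ => (x : DualV r) z.1) (σ.equivFin.symm i)
          from rfl, Equiv.prod_comp σ.equivFin.symm (fun x : ↥σ => (x : DualV r) z.1),
        Finset.prod_coe_sort σ (fun α => α z.1)]
    rw [hphi]
    refine Submodule.subset_span ⟨σ.card, κ, ?_, ?_, rfl⟩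
    · intro i; exact hsub (σ.equivFin.symm i).2
    · rw [hrange]; exact hsp
  refine ⟨hpart1, ?_, ?_⟩
  · intro v f hf
    exact (dop_mem r Δ hΔ v f hf).1
  · intro W hW1 hW2
    refine Submodule.span_le.mpr ?_
    rintro g ⟨k, κ, hκ, hsp, rfl⟩
    exact main_ind r Δ hΔ W hW1 hW2 R hR (∑ i, R (κ i)) k κ hκ hsp le_rfl

end
end

section
/- Every element of G_Δ is a finite linear combination of functions of the form 1/∏_{α∈σ} α^{n_α}, where σ ranges over the bases of Δ and the exponents n_α are positive integers. -/
open Topology Filter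
open scoped Classical

noncomputable section

namespace Stmt2Aux

variable (r : ℕ) (Δ : Finset (DualV r))

/-- The function `1/∏_{α ∈ M} α` on the regular set, for a multiset of forms. -/
def PFn (M : Multiset (DualV r)) : ↥(Reg r Δ) → ℂ :=
  fun z => ((M.map (fun α => α z.1)).prod)⁻¹

/-- An injective indexing of the elements of `Δ`. -/
def idxF (α : DualV r) : ℕ := if h : α ∈ Δ then (Δ.equivFin ⟨α, h⟩ : ℕ) else 0

lemma idx_lt {α : DualV r} (h : α ∈ Δ) : idxF r Δ α < Δ.card := by
  rw [idxF, dif_pos h]; exact (Δ.equivFin ⟨α, h⟩).isLt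

lemma idx_inj {α β : DualV r} (hα : α ∈ Δ) (hβ : β ∈ Δ)
    (h : idxF r Δ α = idxF r Δ β) : α = β := by
  rw [idxF, dif_pos hα, idxF, dif_pos hβ] at h
  have := Δ.equivFin.injective (Fin.val_injective h)
  exact congrArg Subtype.val this

/-- Weight of a form: larger for smaller index. -/
def wF (α : DualV r) : ℕ := 2 ^ (Δ.card - idxF r Δ α)

/-- The induction measure. -/
def muF (M : Multiset (DualV r)) : ℕ := (M.map (wF r Δ)).sum

/-- The target set of simple fractions with positive exponents. -/
def TSet : Set (↥(Reg r Δ) → ℂ) :=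
  {g : ↥(Reg r Δ) → ℂ | ∃ (σ : Finset (DualV r)) (n : DualV r → ℕ),
    IsΔBasis r Δ σ ∧ (∀ α ∈ σ, 1 ≤ n α) ∧
    g = fun z => (∏ α ∈ σ, (α z.1) ^ (n α))⁻¹}

lemma key : ∀ (n : ℕ) (M : Multiset (DualV r)), muF r Δ M < n →
    (∀ α ∈ M, α ∈ Δ) →
    Submodule.span ℂ ((M.toFinset : Set (DualV r))) = ⊤ →
    PFn r Δ M ∈ Submodule.span ℂ (TSet r Δ) := by
  intro n
  induction n with
  | zero => intro M h; omega
  | succ n ih =>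
    intro M hmu hMD hMspan
    by_cases hLI : LinearIndependent ℂ
        (fun x : ↥((M.toFinset : Set (DualV r))) => (x : DualV r))
    · -- base case: the support is a basis of Δ
      apply Submodule.subset_span
      refine ⟨M.toFinset, fun α => M.count α, ⟨?_, hLI, hMspan⟩, ?_, ?_⟩
      · intro α hα; exact hMD α (Multiset.mem_toFinset.mp hα)
      · intro α hα
        exact Multiset.one_le_count_iff_mem.mpr (Multiset.mem_toFinset.mp hα)
      · funext z
        show ((M.map (fun α => α z.1)).prod)⁻¹ = _
        congr 1
        exact Finset.prod_multiset_map_count M _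
    · -- inductive step: use a linear relation
      have hLI' : ¬ LinearIndependent ℂ
          ((id : DualV r → DualV r) ∘ ((↑) : ((M.toFinset : Set (DualV r))) → DualV r)) := hLI
      obtain ⟨l, hlsup, hlsum, hlne⟩ := (linearDepOn_iff (R := ℂ) (v := (id : DualV r → DualV r))
        (s := (M.toFinset : Set (DualV r)))).mp hLI'
      have hsupS : ∀ γ ∈ l.support, γ ∈ M.toFinset := by
        intro γ hγ
        exact Finset.mem_coe.mp ((Finsupp.mem_supported ℂ l).mp hlsup hγ)
      have hsupM : ∀ γ ∈ l.support, γ ∈ M := fun γ hγ =>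
        Multiset.mem_toFinset.mp (hsupS γ hγ)
      have hne : l.support.Nonempty := Finsupp.support_nonempty_iff.mpr hlne
      obtain ⟨β₀, hβ₀s, hβ₀max⟩ := Finset.exists_max_image l.support (idxF r Δ) hne
      have hlβ₀ : l β₀ ≠ 0 := Finsupp.mem_support_iff.mp hβ₀s
      have hβ₀M : β₀ ∈ M := hsupM β₀ hβ₀s
      have hβ₀D : β₀ ∈ Δ := hMD β₀ hβ₀M
      set u : Finset (DualV r) := l.support.erase β₀ with hu
      set c : DualV r → ℂ := fun α => -((l β₀)⁻¹ * l α) with hc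
      -- the linear relation
      have hrel : (∑ α ∈ u, c α • α) = β₀ := by
        have h1 : l β₀ • β₀ + ∑ α ∈ u, l α • α = 0 := by
          rw [Finset.add_sum_erase _ (fun α => l α • α) hβ₀s]
          simpa using hlsum
        have h2 : ∑ α ∈ u, l α • α = -(l β₀ • β₀) :=
          eq_neg_of_add_eq_zero_right h1
        have h3 : (∑ α ∈ u, c α • α) = (-(l β₀)⁻¹) • ∑ α ∈ u, l α • α := by
          rw [Finset.smul_sum]
          refine Finset.sum_congr rfl (fun α _ => ?_)
          rw [smul_smul, hc]; ring_nf
        rw [h3, h2, smul_neg, smul_smul, neg_mul, inv_mul_cancel₀ hlβ₀,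
          neg_smul, one_smul, neg_neg]
      -- facts about elements of u
      have huS : ∀ α ∈ u, α ∈ M.toFinset := fun α hα =>
        hsupS α (Finset.mem_of_mem_erase hα)
      have huM : ∀ α ∈ u, α ∈ M := fun α hα =>
        Multiset.mem_toFinset.mp (huS α hα)
      have huD : ∀ α ∈ u, α ∈ Δ := fun α hα => hMD α (huM α hα)
      have huidx : ∀ α ∈ u, idxF r Δ α < idxF r Δ β₀ := by
        intro α hα
        have hle := hβ₀max α (Finset.mem_of_mem_erase hα)
        have hne' : α ≠ β₀ := Finset.ne_of_mem_erase hα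
        rcases lt_or_eq_of_le hle with h | h
        · exact h
        · exact absurd (idx_inj r Δ (huD α hα) hβ₀D h) hne'
      -- the partial fraction identity
      have hId : PFn r Δ M = ∑ α ∈ u, c α • PFn r Δ (β₀ ::ₘ M.erase α) := by
        funext z
        have hz : ∀ γ ∈ Δ, γ z.1 ≠ 0 := z.2
        set f : DualV r → ℂ := fun α => α z.1 with hf
        set P : ℂ := (M.map f).prod with hP
        have hP0 : P ≠ 0 := by
          rw [hP, Ne, Multiset.prod_eq_zero_iff]
          intro h0
          obtain ⟨γ, hγ, hγ0⟩ := Multiset.mem_map.mp h0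
          exact hz γ (hMD γ hγ) hγ0
        have hfβ₀ : f β₀ ≠ 0 := hz β₀ hβ₀D
        have hsumeval : ∑ α ∈ u, c α * f α = f β₀ := by
          have := congrArg (fun ξ : DualV r => ξ z.1) hrel
          simpa [hf] using this
        have hterm : ∀ α ∈ u,
            c α * PFn r Δ (β₀ ::ₘ M.erase α) z
              = (c α * f α) * ((f β₀)⁻¹ * P⁻¹) := by
          intro α hα
          have hαM : α ∈ M := huM α hα
          have hfα : f α ≠ 0 := hz α (huD α hα)
          have hEP : f α * ((M.erase α).map f).prod = P := by
            conv_rhs => rw [hP, ← Multiset.cons_erase hαM]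
            rw [Multiset.map_cons, Multiset.prod_cons]
          have hEinv : (((M.erase α).map f).prod)⁻¹ = f α * P⁻¹ := by
            rw [← hEP, mul_inv, ← mul_assoc, mul_inv_cancel₀ hfα, one_mul]
          show c α * (((β₀ ::ₘ M.erase α).map f).prod)⁻¹ = _
          rw [Multiset.map_cons, Multiset.prod_cons, mul_inv, hEinv]
          ring
        rw [Finset.sum_apply]
        simp only [Pi.smul_apply, smul_eq_mul]
        rw [Finset.sum_congr rfl hterm, ← Finset.sum_mul, hsumeval,
          ← mul_assoc, mul_inv_cancel₀ hfβ₀, one_mul]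
        rfl
      rw [hId]
      refine Submodule.sum_mem _ (fun α hα => Submodule.smul_mem _ _ ?_)
      have hαM : α ∈ M := huM α hα
      -- measure decreases
      have hmu' : muF r Δ (β₀ ::ₘ M.erase α) < n := by
        have e1 : muF r Δ M = wF r Δ α + muF r Δ (M.erase α) := by
          conv_lhs => rw [muF, ← Multiset.cons_erase hαM]
          rw [Multiset.map_cons, Multiset.sum_cons]; rfl
        have e2 : muF r Δ (β₀ ::ₘ M.erase α)
            = wF r Δ β₀ + muF r Δ (M.erase α) := by
          rw [muF, Multiset.map_cons, Multiset.sum_cons]; rfl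
        have hw : wF r Δ β₀ < wF r Δ α := by
          rw [wF, wF]
          apply Nat.pow_lt_pow_right (by norm_num)
          have h1 := huidx α hα
          have h2 := idx_lt r Δ hβ₀D
          omega
        omega
      -- membership in Δ
      have hMD' : ∀ γ ∈ β₀ ::ₘ M.erase α, γ ∈ Δ := by
        intro γ hγ
        rcases Multiset.mem_cons.mp hγ with h | h
        · exact h ▸ hβ₀D
        · exact hMD γ (Multiset.mem_of_mem_erase h)
      -- spanning is preserved
      have hspan' : Submodule.span ℂ
          (((β₀ ::ₘ M.erase α).toFinset : Set (DualV r))) = ⊤ := by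
        set M' := β₀ ::ₘ M.erase α with hM'
        have hmemM' : ∀ γ, γ ∈ M' → ((γ : DualV r) ∈
            Submodule.span ℂ ((M'.toFinset : Set (DualV r)))) := by
          intro γ hγ
          exact Submodule.subset_span (Multiset.mem_toFinset.mpr hγ)
        have hβ₀' : (β₀ : DualV r) ∈
            Submodule.span ℂ ((M'.toFinset : Set (DualV r))) :=
          hmemM' β₀ (Multiset.mem_cons_self _ _)
        have hother : ∀ γ ∈ M, γ ≠ α → (γ : DualV r) ∈
            Submodule.span ℂ ((M'.toFinset : Set (DualV r))) := by
          intro γ hγ hγα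
          exact hmemM' γ (Multiset.mem_cons_of_mem
            ((Multiset.mem_erase_of_ne hγα).mpr hγ))
        have hαspan : (α : DualV r) ∈
            Submodule.span ℂ ((M'.toFinset : Set (DualV r))) := by
          have hcα : c α ≠ 0 := by
            rw [hc]
            have hlα : l α ≠ 0 :=
              Finsupp.mem_support_iff.mp (Finset.mem_of_mem_erase hα)
            simp [hlβ₀, hlα]
          have hsplit : c α • α = β₀ - ∑ γ ∈ u.erase α, c γ • γ := by
            rw [eq_sub_iff_add_eq, Finset.add_sum_erase _ (fun γ => c γ • γ) hα]
            exact hrel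
          have hsum' : (∑ γ ∈ u.erase α, c γ • γ) ∈
              Submodule.span ℂ ((M'.toFinset : Set (DualV r))) := by
            refine Submodule.sum_mem _ (fun γ hγ => Submodule.smul_mem _ _ ?_)
            exact hother γ (huM γ (Finset.mem_of_mem_erase hγ))
              (Finset.ne_of_mem_erase hγ)
          have : (c α • α : DualV r) ∈
              Submodule.span ℂ ((M'.toFinset : Set (DualV r))) := by
            rw [hsplit]; exact Submodule.sub_mem _ hβ₀' hsum'
          have h2 := Submodule.smul_mem _ (c α)⁻¹ this
          rwa [smul_smul, inv_mul_cancel₀ hcα, one_smul] at h2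
        rw [eq_top_iff, ← hMspan]
        apply Submodule.span_le.mpr
        intro γ hγ
        have hγM : γ ∈ M := Multiset.mem_toFinset.mp (Finset.mem_coe.mp hγ)
        by_cases hγα : γ = α
        · exact hγα ▸ hαspan
        · exact hother γ hγM hγα
      exact ih (β₀ ::ₘ M.erase α) hmu' hMD' hspan'

end Stmt2Aux

/-- every element of `G_Δ` is a finite linear combination of functions
`1/∏_{α ∈ σ} α^{n_α}` with `σ` a basis of `Δ` and positive integer exponents `n_α`. -/
theorem stmt2 (r : ℕ) (Δ : Finset (DualV r)) (hΔ : ∀ α ∈ Δ, α ≠ 0) :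
    GΔ r Δ ≤ Submodule.span ℂ
      {g : ↥(Reg r Δ) → ℂ | ∃ (σ : Finset (DualV r)) (n : DualV r → ℕ),
        IsΔBasis r Δ σ ∧ (∀ α ∈ σ, 1 ≤ n α) ∧
        g = fun z => (∏ α ∈ σ, (α z.1) ^ (n α))⁻¹} := by
  apply Submodule.span_le.mpr
  rintro g ⟨k, κ, hκΔ, hκspan, rfl⟩
  have hMD : ∀ α ∈ (List.ofFn κ : Multiset (DualV r)), α ∈ Δ := by
    intro α hα
    obtain ⟨i, rfl⟩ := (List.mem_ofFn (f := κ) (a := α)).mp (Multiset.mem_coe.mp hα)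
    exact hκΔ i
  have hset : (((List.ofFn κ : Multiset (DualV r)).toFinset : Set (DualV r)))
      = Set.range κ := by
    ext α
    simp [Multiset.mem_toFinset, List.mem_ofFn]
  have hkey := Stmt2Aux.key r Δ (Stmt2Aux.muF r Δ (List.ofFn κ) + 1)
    (List.ofFn κ) (Nat.lt_succ_self _) hMD (by rw [hset]; exact hκspan)
  have heq : Stmt2Aux.PFn r Δ (List.ofFn κ) = fun z => (∏ i, κ i z.1)⁻¹ := by
    funext z
    show (((List.ofFn κ : Multiset (DualV r)).map (fun α => α z.1)).prod)⁻¹ = _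
    rw [Multiset.map_coe, Multiset.prod_coe, List.map_ofFn, Fin.prod_ofFn]
    rfl
  rw [← heq]
  exact hkey

end
end

section
/- For every z ∈ ℂ with z ∉ 2iπℤ and every t ∈ ℝ with t ∉ ℤ, the absolutely convergent series satisfies ∑_{n∈ℤ} e^{t(z+2iπn)}/(z+2iπn)² = (t−⌊t⌋)·e^{⌊t⌋z}/(1−e^{−z}) − e^{⌊t⌋z}/((1−e^{−z})(1−e^{z})), where ⌊t⌋ is the integer part of t. -/
open Topology Filter Complex
open scoped Real

noncomputable section

lemma integral_key (A C w : ℂ) (hw : w ≠ 0) :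
    ∫ x in (0:ℝ)..1, ((x:ℂ)*A - C) * Complex.exp (-(x:ℂ)*w) =
      (-(A - C)/w - A/w^2) * Complex.exp (-w) - (C/w - A/w^2) := by
  have key : ∀ y : ℝ, HasDerivAt (fun x : ℝ => (-((x:ℂ)*A - C)/w - A/w^2) * Complex.exp (-(x:ℂ)*w))
      (((y:ℂ)*A - C) * Complex.exp (-(y:ℂ)*w)) y := by
    intro y
    have h : ∀ u : ℂ, HasDerivAt (fun x : ℂ => (-(x*A - C)/w - A/w^2) * Complex.exp (-x*w))
        ((u*A - C) * Complex.exp (-u*w)) u := by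
      intro u
      have h1 : HasDerivAt (fun x : ℂ => -(x*A - C)/w - A/w^2) (-A/w) u := by
        have := ((((hasDerivAt_id u).mul_const A).sub_const C).neg.div_const w).sub_const (A/w^2)
        simpa using this
      have h2 : HasDerivAt (fun x : ℂ => Complex.exp (-x*w)) (Complex.exp (-u*w) * (-w)) u := by
        have := ((hasDerivAt_id u).neg.mul_const w).cexp
        simpa using this
      have h3 := h1.mul h2
      refine h3.congr_deriv ?_
      field_simp
      ring
    exact (h y).comp_ofReal
  rw [intervalIntegral.integral_eq_sub_of_hasDerivAt (fun x _ => key x)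
    (by apply Continuous.intervalIntegrable; fun_prop)]
  norm_num

lemma alg (u v w : ℂ) (huv : u*v = 1) (hu : (1:ℂ)-u ≠ 0) (hv : (1:ℂ)-v ≠ 0) (hw : w ≠ 0) :
    (-((1/(1-u)) - 1/((1-u)*(1-v)))/w - (1/(1-u))/w^2) * u - ((1/((1-u)*(1-v)))/w - (1/(1-u))/w^2) = 1/w^2 := by
  field_simp
  linear_combination w * huv

/-- for `z ∉ 2iπℤ` and `t ∈ ℝ ∖ ℤ`, the absolutely convergent
series satisfies
`∑_{n∈ℤ} e^{t(z+2iπn)}/(z+2iπn)² = (t-⌊t⌋)e^{⌊t⌋z}/(1-e^{-z}) - e^{⌊t⌋z}/((1-e^{-z})(1-e^{z}))`. -/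
theorem stmt13 (z : ℂ) (hz : ∀ n : ℤ, z ≠ 2 * (Real.pi : ℂ) * Complex.I * n)
    (t : ℝ) (ht : ∀ n : ℤ, t ≠ (n : ℝ)) :
    Summable (fun n : ℤ => ‖Complex.exp ((t : ℂ) * (z + 2 * (Real.pi : ℂ) * Complex.I * n)) /
      (z + 2 * (Real.pi : ℂ) * Complex.I * n) ^ 2‖) ∧
    ∑' n : ℤ, Complex.exp ((t : ℂ) * (z + 2 * (Real.pi : ℂ) * Complex.I * n)) /
      (z + 2 * (Real.pi : ℂ) * Complex.I * n) ^ 2 =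
    ((t : ℂ) - (⌊t⌋ : ℂ)) * Complex.exp ((⌊t⌋ : ℂ) * z) / (1 - Complex.exp (-z)) -
      Complex.exp ((⌊t⌋ : ℂ) * z) / ((1 - Complex.exp (-z)) * (1 - Complex.exp z)) := by
  haveI : Fact (0 < (1:ℝ)) := ⟨one_pos⟩
  set W : ℤ → ℂ := fun n => z + 2 * (Real.pi : ℂ) * Complex.I * n with hW
  have hw : ∀ n : ℤ, W n ≠ 0 := by
    intro n h
    apply hz (-n)
    push_cast
    have : z = -(2 * (Real.pi : ℂ) * Complex.I * n) := by linear_combination h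
    rw [this]; ring
  set u := Complex.exp (-z) with hu_def
  set v := Complex.exp z with hv_def
  have huv : u * v = 1 := by rw [hu_def, hv_def, ← Complex.exp_add]; simp
  have hv1 : v ≠ 1 := by
    intro h
    rcases Complex.exp_eq_one_iff.mp h with ⟨n, hn⟩
    exact hz n (by rw [hn]; push_cast; ring)
  have hu1 : u ≠ 1 := by
    intro h
    rcases Complex.exp_eq_one_iff.mp h with ⟨n, hn⟩
    exact hz (-n) (by push_cast; linear_combination -hn)
  have hu' : (1:ℂ) - u ≠ 0 := sub_ne_zero.mpr (Ne.symm hu1)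
  have hv' : (1:ℂ) - v ≠ 0 := sub_ne_zero.mpr (Ne.symm hv1)
  set a : ℂ := 1/(1-u) with ha_def
  set c : ℂ := 1/((1-u)*(1-v)) with hc_def
  set g : ℝ → ℂ := fun x => ((x:ℂ)*a - c) * Complex.exp (-(x:ℂ)*z) with hg_def
  -- continuity of the lift
  have hg01 : g 0 = g 1 := by
    simp only [hg_def]
    push_cast
    simp only [zero_mul, neg_zero, Complex.exp_zero, one_mul, neg_one_mul, ← hu_def]
    rw [ha_def, hc_def]
    field_simp
    linear_combination huv
  set G : C(AddCircle (1:ℝ), ℂ) :=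
    ⟨AddCircle.liftIco 1 0 g, AddCircle.liftIco_zero_continuous hg01 (show Continuous g by fun_prop).continuousOn⟩
    with hG_def
  -- Fourier coefficients
  have hexpW : ∀ n : ℤ, Complex.exp (-(W n)) = u := by
    intro n
    rw [hW, hu_def]
    simp only [neg_add]
    rw [Complex.exp_add]
    have : Complex.exp (-(2 * (Real.pi:ℂ) * Complex.I * n)) = 1 := by
      rw [show -(2 * (Real.pi:ℂ) * Complex.I * n) = (-n : ℤ) * (2 * Real.pi * Complex.I) by
        push_cast; ring]
      exact Complex.exp_int_mul_two_pi_mul_I (-n)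
    rw [this, mul_one]
  have hcoeff : ∀ n : ℤ, fourierCoeff (⇑G) n = 1/(W n)^2 := by
    intro n
    show fourierCoeff (AddCircle.liftIco 1 0 g) n = _
    rw [fourierCoeff_liftIco_eq, fourierCoeffOn_eq_integral]
    have hint : Set.EqOn (fun x : ℝ => fourier (-n) (x : AddCircle ((0:ℝ)+1-0)) • g x)
        (fun x : ℝ => ((x:ℂ)*a - c) * Complex.exp (-(x:ℂ)*(W n))) (Set.uIcc (0:ℝ) (0+1)) := by
      intro x _
      simp only
      rw [fourier_coe_apply]
      simp only [smul_eq_mul, hg_def, hW]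
      rw [mul_comm, mul_assoc, ← Complex.exp_add]
      push_cast
      ring_nf
    rw [intervalIntegral.integral_congr hint]
    rw [show (0:ℝ)+1 = 1 by norm_num]
    rw [integral_key a c (W n) (hw n)]
    rw [hexpW n]
    norm_num
    rw [ha_def, hc_def]
    linear_combination alg u v (W n) huv hu' hv' (hw n)
  -- summability of `1 / W n ^ 2`
  have hs : Summable (fun n : ℤ => ‖1/(W n)^2‖) := by
    set α : ℝ := z.im / (2*Real.pi) with hα
    have hsum : Summable (fun n : ℤ => (1/(2*Real.pi)^2) * (1/|(n:ℝ) + α|^(2:ℝ))) :=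
      ((Real.summable_one_div_int_add_rpow α 2).mpr one_lt_two).mul_left _
    refine Summable.of_norm_bounded_eventually hsum ?_
    rw [Filter.eventually_cofinite]
    refine Set.Finite.subset (Set.finite_singleton (⌊-α⌋)) ?_
    intro n hn
    simp only [Set.mem_setOf_eq, Set.mem_singleton_iff] at hn ⊢
    by_contra hne
    apply hn
    have hna : (n:ℝ) + α ≠ 0 := by
      intro h
      apply hne
      have h2 : ((n:ℤ):ℝ) = -α := by linarith
      rw [← h2, Int.floor_intCast]
    have hpos : 0 < |(n:ℝ) + α| := abs_pos.mpr hna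
    have hpi : (0:ℝ) < 2*Real.pi := by positivity
    have him : (W n).im = 2*Real.pi*((n:ℝ)+α) := by
      have : α * (2*Real.pi) = z.im := by rw [hα]; field_simp
      simp only [hW, Complex.add_im, Complex.mul_im, Complex.mul_re, Complex.I_im, Complex.I_re,
        Complex.ofReal_re, Complex.ofReal_im, Complex.intCast_im, Complex.intCast_re,
        Complex.re_ofNat, Complex.im_ofNat]
      nlinarith [this]
    have hle : (2*Real.pi) * |(n:ℝ)+α| ≤ ‖W n‖ := by
      calc (2*Real.pi) * |(n:ℝ)+α| = |(W n).im| := by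
            rw [him, abs_mul, abs_of_pos hpi]
        _ ≤ ‖W n‖ := Complex.abs_im_le_norm (W n)
        _ = ‖W n‖ := rfl
    rw [norm_norm]
    have h1 : ‖1/(W n)^2‖ = 1/‖W n‖^2 := by
      rw [norm_div, norm_one, norm_pow]
    rw [h1]
    rw [Real.rpow_two]
    rw [show (1/(2*Real.pi)^2) * (1/|(n:ℝ)+α|^2) = 1/((2*Real.pi)*|(n:ℝ)+α|)^2 by ring]
    apply one_div_le_one_div_of_le (by positivity)
    exact pow_le_pow_left₀ (by positivity) hle 2
  have hsumcoeff : Summable (fourierCoeff (⇑G)) :=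
    (Summable.of_norm hs).congr (fun n => (hcoeff n).symm)
  set x : AddCircle (1:ℝ) := (↑(Int.fract t) : AddCircle (1:ℝ)) with hx
  have hps := has_pointwise_sum_fourier_series_of_summable hsumcoeff x
  have hGx : G x = g (Int.fract t) := by
    show AddCircle.liftIco 1 0 g (↑(Int.fract t) : AddCircle (1:ℝ)) = g (Int.fract t)
    exact AddCircle.liftIco_zero_coe_apply ⟨Int.fract_nonneg t, Int.fract_lt_one t⟩
  rw [hGx] at hps
  simp_rw [hcoeff] at hps
  have hfour : ∀ n : ℤ, fourier n x = Complex.exp (2*(Real.pi:ℂ)*Complex.I*n*(Int.fract t : ℝ)) := by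
    intro n
    rw [hx, fourier_coe_apply]
    norm_num
  have hfr : ((Int.fract t : ℝ) : ℂ) = (t:ℂ) - (⌊t⌋:ℂ) := by
    rw [Int.fract]; push_cast; ring
  have hterm : ∀ n : ℤ, Complex.exp ((t:ℂ) * W n) / (W n)^2
      = Complex.exp ((t:ℂ)*z) * ((1/(W n)^2) • fourier n x) := by
    intro n
    rw [hfour n, smul_eq_mul]
    have e1 : (t:ℂ) * W n = (t:ℂ)*z + (2*(Real.pi:ℂ)*Complex.I*n*((Int.fract t : ℝ):ℂ)
        + ((n*⌊t⌋ : ℤ):ℂ)*(2*(Real.pi:ℂ)*Complex.I)) := by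
      rw [hW, hfr]
      push_cast
      ring
    rw [e1, Complex.exp_add, Complex.exp_add, Complex.exp_int_mul_two_pi_mul_I, mul_one]
    field_simp
  have hsum2 : HasSum (fun n : ℤ => Complex.exp ((t:ℂ)*W n)/(W n)^2)
      (Complex.exp ((t:ℂ)*z) * g (Int.fract t)) := by
    rw [funext hterm]
    exact hps.mul_left _
  constructor
  · show Summable (fun n : ℤ => ‖Complex.exp ((t:ℂ) * W n) / (W n)^2‖)
    have hnrm : ∀ n : ℤ, ‖Complex.exp ((t:ℂ) * W n) / (W n)^2‖
        = ‖Complex.exp ((t:ℂ)*z)‖ * ‖1/(W n)^2‖ := by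
      intro n
      rw [hterm n, smul_eq_mul, norm_mul, norm_mul, hfour n]
      have : ‖Complex.exp (2*(Real.pi:ℂ)*Complex.I*n*((Int.fract t : ℝ):ℂ))‖ = 1 := by
        rw [Complex.norm_exp]
        norm_num [Complex.mul_re, Complex.mul_im]
      rw [this, mul_one]
    rw [funext hnrm]
    exact hs.mul_left _
  · show (∑' n : ℤ, Complex.exp ((t:ℂ) * W n) / (W n)^2) = _
    rw [hsum2.tsum_eq, hg_def]
    simp only
    rw [hfr]
    rw [show -((t:ℂ) - (⌊t⌋:ℂ))*z = (⌊t⌋:ℂ)*z - (t:ℂ)*z by ring, Complex.exp_sub]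
    rw [ha_def, hc_def]
    field_simp

end
end
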